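/- (Soundness, loop case.) Suppose correspondence is preserved by the rules generated by Φ(S, n_q, nᵢ, p, R ∪ {e}) for the loop body (induction hypothesis). Then correspondence is preserved by Φ(while e do S, nᵢ, nⱼ, p, R): if (μ₀,λ₀) with procedure p topmost corresponds to ⟨ρ₀,θ₀⟩ and (μ₀,λ₀,e) ⇓ false, the rule guarded by !e moves control from nᵢ to nⱼ with unchanged state, matching rule WHILE-F (μ' = μ₀, λ' = λ₀, ρ' = ρ₀, η'(p) = η₀(p)), so correspondence holds at nⱼ; if (μ₀,λ₀,e) ⇓ true, the rule guarded by e moves control to the body entry n_q with unchanged state, the body execution preserves correspondence back at nᵢ (by the induction hypothesis), and, by induction on the big-step derivation of WHILE-T, the final configuration (μ'',λ'') corresponds to the final pushdown state at nⱼ. -/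
import Mathlib


/-!
STATEMENT 10 (Soundness, loop case).  Setup as in the other soundness
cases.  `WhileRel guard body` is the least relation closed under the two
rules of a while loop: if the guard evaluates to false, the loop exits with
unchanged state (rule WHILE-F; on the pushdown side the rule guarded by !e
moves control from nᵢ to nⱼ with unchanged state), and if the guard
evaluates to true, the body executes once and the loop repeats (rule
WHILE-T; on the pushdown side the rule guarded by e moves control to the
body entry n_q with unchanged state, followed by the body rules
Φ(S,n_q,nᵢ,p,R∪{e}) leading back to nᵢ).  `eval`/`pdEval` are the
operational/pushdown evaluations of the guard e, which agree under
correspondence, and the induction hypothesis `hbody` states that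
correspondence is preserved by the body rules.  Conclusion (by induction on
the big-step derivation): correspondence is preserved by
Φ(while e do S, nᵢ, nⱼ, p, R).
-/

abbrev Loc := ℕ
abbrev Val := ℤ
abbrev Var := String

abbrev Cfg := (Loc → Option Val) × (Loc → Option Val)

abbrev PdState := (Loc → Val) × (Var → Val)

def Corresponds (G : Loc → Option Var) (c : Cfg) (s : PdState) : Prop :=
  (∀ l, (c.1 l).isSome → c.1 l = some (s.1 l)) ∧
  (∀ l x, (c.2 l).isSome → G l = some x → c.2 l = some (s.2 x))

def Preserves (G : Loc → Option Var) (Op : Cfg → Cfg → Prop)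
    (Pd : PdState → PdState → Prop) : Prop :=
  ∀ c s c' s', Corresponds G c s → Op c c' → Pd s s' → Corresponds G c' s'

/-- Execution of a while loop with guard evaluation `guard` and body
execution `body`: either the guard is false and the state is unchanged, or
the guard is true, the body executes once, and the loop repeats. -/
inductive WhileRel {α : Type*} (guard : α → Bool → Prop)
    (body : α → α → Prop) : α → α → Prop where
  | whileFalse {a : α} : guard a false → WhileRel guard body a a
  | whileTrue {a b c : α} : guard a true → body a b →
      WhileRel guard body b c → WhileRel guard body a c

theorem soundness_loop (G : Loc → Option Var)
    (eval : Cfg → Bool → Prop) (pdEval : PdState → Bool → Prop)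
    (OpS : Cfg → Cfg → Prop) (PdS : PdState → PdState → Prop)
    -- operational guard evaluation is deterministic
    (hevalDet : ∀ c b b', eval c b → eval c b' → b = b')
    -- under correspondence, the operational evaluation of the guard and the
    -- guard conditions e / !e of the generated pushdown rules agree
    (hguard : ∀ c s b, Corresponds G c s → (eval c b ↔ pdEval s b))
    -- induction hypothesis for the body rules Φ(S,n_q,nᵢ,p,R∪{e})
    (hbody : Preserves G OpS PdS) :
    Preserves G (WhileRel eval OpS) (WhileRel pdEval PdS) := by
  intro c s c' s' hcs hop hpd
  induction hop generalizing s s' with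
  | whileFalse hf =>
    cases hpd with
    | whileFalse _ => exact hcs
    | whileTrue hg _ _ =>
      have := (hguard _ _ _ hcs).mpr hg
      exact absurd (hevalDet _ _ _ hf this) (by simp)
  | whileTrue hg hb _ ih =>
    cases hpd with
    | whileFalse hf =>
      have := (hguard _ _ _ hcs).mpr hf
      exact absurd (hevalDet _ _ _ hg this) (by simp)
    | whileTrue _ hpb hrest =>
      exact ih _ _ (hbody _ _ _ _ hcs hb hpb) hrest
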